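/- Let A be a partitioned LQCA, with local transition δ = δ_Q ∘ δ_p where δ_p is the classical permutation part and δ_Q : Σ → ℂ^Σ is the quantum part with local transition matrix Q(y,x) = δ_Q(x)(y). Then the following are equivalent: (1) Q is unitary; (2) the time evolution operator U_A preserves the ℓ² norm; (3) U_A is unitary. -/

import Mathlib

open scoped Classical
set_option linter.unusedSectionVars false

namespace WatrousAux

variable {r : ℕ} {S : Fin r → Type*} [∀ j, Fintype (S j)] [∀ j, DecidableEq (S j)]

abbrev CS (q : ∀ j, S j) : Type _ := {c : ℤ → ∀ j, S j // {i | c i ≠ q}.Finite}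

variable (q : ∀ j, S j) (δQ : (∀ j, S j) → EuclideanSpace ℂ (∀ j, S j))

/-- The finitely-supported infinite product equals a finite product. -/
lemma W_eq (hq : ∀ x, δQ q x = if x = q then 1 else 0)
    {a d : ℤ → ∀ j, S j} {F : Finset ℤ}
    (ha : ∀ i ∉ F, a i = q) (hd : ∀ i ∉ F, d i = q) :
    ∏ᶠ i, δQ (a i) (d i) = ∏ i ∈ F, δQ (a i) (d i) := by
  apply finprod_eq_finset_prod_of_mulSupport_subset
  intro i hi
  by_contra hF
  apply hi
  simp only [Function.mulSupport, Set.mem_setOf_eq, not_not] at *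
  rw [ha i hF, hd i hF, hq]
  simp

lemma W_zero (hq : ∀ x, δQ q x = if x = q then 1 else 0)
    {a d : ℤ → ∀ j, S j} (sa : {i | a i ≠ q}.Finite) (sd : {i | d i ≠ q}.Finite)
    {i0 : ℤ} (hai : a i0 = q) (hdi : d i0 ≠ q) :
    ∏ᶠ i, δQ (a i) (d i) = 0 := by
  have hF : ∀ i ∉ (sa.toFinset ∪ sd.toFinset), a i = q ∧ d i = q := by
    intro i hi
    simp only [Finset.mem_union, Set.Finite.mem_toFinset, Set.mem_setOf_eq, not_or, not_not] at hi
    exact hi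
  rw [W_eq q δQ hq (fun i hi => (hF i hi).1) (fun i hi => (hF i hi).2)]
  refine Finset.prod_eq_zero (i := i0) ?_ ?_
  · simp [Set.Finite.mem_toFinset, hdi]
  · rw [hai, hq, if_neg hdi]

lemma W_zero' (hq : ∀ x, δQ q x = if x = q then 1 else 0)
    (h0 : ∀ x, x ≠ q → δQ x q = 0)
    {a d : ℤ → ∀ j, S j} (sa : {i | a i ≠ q}.Finite) (sd : {i | d i ≠ q}.Finite)
    {i0 : ℤ} (hai : a i0 ≠ q) (hdi : d i0 = q) :
    ∏ᶠ i, δQ (a i) (d i) = 0 := by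
  have hF : ∀ i ∉ (sa.toFinset ∪ sd.toFinset), a i = q ∧ d i = q := by
    intro i hi
    simp only [Finset.mem_union, Set.Finite.mem_toFinset, Set.mem_setOf_eq, not_or, not_not] at hi
    exact hi
  rw [W_eq q δQ hq (fun i hi => (hF i hi).1) (fun i hi => (hF i hi).2)]
  refine Finset.prod_eq_zero (i := i0) ?_ ?_
  · simp [Set.Finite.mem_toFinset, hai]
  · rw [hdi, h0 _ hai]

/-- Extension of a function on a finite window to a configuration. -/
def extC (F : Finset ℤ) (v : ↥F → ∀ j, S j) : CS q :=
  ⟨fun i => if h : i ∈ F then v ⟨i, h⟩ else q, by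
    apply Set.Finite.subset F.finite_toSet
    intro i hi
    by_contra hF
    rw [Finset.mem_coe] at hF
    exact hi (dif_neg hF)⟩

lemma extC_apply_mem (F : Finset ℤ) (v : ↥F → ∀ j, S j) {i : ℤ} (h : i ∈ F) :
    (extC q F v).1 i = v ⟨i, h⟩ := dif_pos h

lemma extC_apply_not_mem (F : Finset ℤ) (v : ↥F → ∀ j, S j) {i : ℤ} (h : i ∉ F) :
    (extC q F v).1 i = q := dif_neg h

lemma tsum_CS_eq_sum {M : Type*} [AddCommMonoid M] [TopologicalSpace M] (F : Finset ℤ)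
    (g : CS q → M) (hg : ∀ e : CS q, g e ≠ 0 → ∀ i ∉ F, e.1 i = q) :
    ∑' e : CS q, g e = ∑ v : (↥F → ∀ j, S j), g (extC q F v) := by
  rw [← tsum_fintype (L := .unconditional _)]
  refine (tsum_eq_tsum_of_ne_zero_bij (fun v => extC q F v.1) ?_ ?_ ?_)
  · intro v w hvw
    apply Subtype.ext; funext i
    have := congrArg (fun e : CS q => e.1 i.1) hvw
    simpa [extC_apply_mem q F _ i.2] using this
  · intro e he
    refine ⟨⟨fun i => e.1 i.1, ?_⟩, ?_⟩
    · have : extC q F (fun i : ↥F => e.1 i.1) = e := by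
        apply Subtype.ext; funext i
        by_cases h : i ∈ F
        · exact extC_apply_mem q F _ h
        · rw [extC_apply_not_mem q F _ h, hg e he i h]
      simpa [Function.mem_support, this] using he
    · apply Subtype.ext; funext i
      by_cases h : i ∈ F
      · exact extC_apply_mem q F _ h
      · rw [extC_apply_not_mem q F _ h, hg e he i h]
  · intro v; rfl


lemma sum_col (hq : ∀ x, δQ q x = if x = q then 1 else 0)
    {a b : ℤ → ∀ j, S j} {F : Finset ℤ}
    (sa : {i | a i ≠ q}.Finite) (sb : {i | b i ≠ q}.Finite)
    (ha : ∀ i ∉ F, a i = q) (hb : ∀ i ∉ F, b i = q) :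
    ∑' e : CS q, (starRingEnd ℂ) (∏ᶠ i, δQ (a i) (e.1 i)) * ∏ᶠ i, δQ (b i) (e.1 i)
      = ∏ i ∈ F, ∑ x : ∀ j, S j, (starRingEnd ℂ) (δQ (a i) x) * δQ (b i) x := by
  have hsupp : ∀ e : CS q,
      (starRingEnd ℂ) (∏ᶠ i, δQ (a i) (e.1 i)) * (∏ᶠ i, δQ (b i) (e.1 i)) ≠ 0 →
      ∀ i ∉ F, e.1 i = q := by
    intro e he i hiF
    by_contra hei
    exact he (by rw [W_zero q δQ hq sa e.2 (ha i hiF) hei, map_zero, zero_mul])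
  rw [tsum_CS_eq_sum q F _ hsupp]
  have key : ∀ v : ↥F → ∀ j, S j,
      (starRingEnd ℂ) (∏ᶠ i, δQ (a i) ((extC q F v).1 i)) * ∏ᶠ i, δQ (b i) ((extC q F v).1 i)
        = ∏ i : ↥F, (starRingEnd ℂ) (δQ (a i.1) (v i)) * δQ (b i.1) (v i) := by
    intro v
    rw [W_eq q δQ hq ha (fun i h => extC_apply_not_mem q F v h),
        W_eq q δQ hq hb (fun i h => extC_apply_not_mem q F v h), map_prod,
        ← Finset.prod_mul_distrib, ← Finset.prod_coe_sort]
    exact Finset.prod_congr rfl fun i _ => by rw [extC_apply_mem q F v i.2]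
  rw [Finset.sum_congr rfl (fun v _ => key v),
    ← Fintype.prod_sum (fun (i : ↥F) (x : ∀ j, S j) =>
      (starRingEnd ℂ) (δQ (a i.1) x) * δQ (b i.1) x)]
  exact Finset.prod_coe_sort F (fun i => ∑ x : ∀ j, S j, (starRingEnd ℂ) (δQ (a i) x) * δQ (b i) x)

lemma sum_row (hq : ∀ x, δQ q x = if x = q then 1 else 0)
    (h0 : ∀ x, x ≠ q → δQ x q = 0)
    {a b : ℤ → ∀ j, S j} {F : Finset ℤ}
    (sa : {i | a i ≠ q}.Finite) (sb : {i | b i ≠ q}.Finite)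
    (ha : ∀ i ∉ F, a i = q) (hb : ∀ i ∉ F, b i = q) :
    ∑' e : CS q, (∏ᶠ i, δQ (e.1 i) (a i)) * (starRingEnd ℂ) (∏ᶠ i, δQ (e.1 i) (b i))
      = ∏ i ∈ F, ∑ x : ∀ j, S j, δQ x (a i) * (starRingEnd ℂ) (δQ x (b i)) := by
  have hsupp : ∀ e : CS q,
      (∏ᶠ i, δQ (e.1 i) (a i)) * (starRingEnd ℂ) (∏ᶠ i, δQ (e.1 i) (b i)) ≠ 0 →
      ∀ i ∉ F, e.1 i = q := by
    intro e he i hiF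
    by_contra hei
    exact he (by rw [W_zero' q δQ hq h0 e.2 sa hei (ha i hiF), zero_mul])
  rw [tsum_CS_eq_sum q F _ hsupp]
  have key : ∀ v : ↥F → ∀ j, S j,
      (∏ᶠ i, δQ ((extC q F v).1 i) (a i)) * (starRingEnd ℂ) (∏ᶠ i, δQ ((extC q F v).1 i) (b i))
        = ∏ i : ↥F, δQ (v i) (a i.1) * (starRingEnd ℂ) (δQ (v i) (b i.1)) := by
    intro v
    rw [W_eq q δQ hq (fun i h => extC_apply_not_mem q F v h) ha,
        W_eq q δQ hq (fun i h => extC_apply_not_mem q F v h) hb, map_prod,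
        ← Finset.prod_mul_distrib, ← Finset.prod_coe_sort]
    exact Finset.prod_congr rfl fun i _ => by rw [extC_apply_mem q F v i.2]
  rw [Finset.sum_congr rfl (fun v _ => key v),
    ← Fintype.prod_sum (fun (i : ↥F) (x : ∀ j, S j) =>
      δQ x (a i.1) * (starRingEnd ℂ) (δQ x (b i.1)))]
  exact Finset.prod_coe_sort F (fun i => ∑ x : ∀ j, S j, δQ x (a i) * (starRingEnd ℂ) (δQ x (b i)))

lemma col_delta (hu : star (Matrix.of fun y x => δQ x y) * (Matrix.of fun y x => δQ x y)
      = (1 : Matrix (∀ j, S j) (∀ j, S j) ℂ)) (u v : ∀ j, S j) :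
    ∑ x : ∀ j, S j, (starRingEnd ℂ) (δQ u x) * δQ v x = if u = v then 1 else 0 := by
  have h := congrFun (congrFun hu u) v
  rw [Matrix.mul_apply] at h
  simp only [Matrix.star_apply, Matrix.of_apply, star, Matrix.one_apply] at h
  convert h using 2 with x
  rfl


lemma row_delta (hu : (Matrix.of fun y x => δQ x y) * star (Matrix.of fun y x => δQ x y)
      = (1 : Matrix (∀ j, S j) (∀ j, S j) ℂ)) (u v : ∀ j, S j) :
    ∑ x : ∀ j, S j, δQ x u * (starRingEnd ℂ) (δQ x v) = if u = v then 1 else 0 := by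
  have h := congrFun (congrFun hu u) v
  rw [Matrix.mul_apply] at h
  simp only [Matrix.star_apply, Matrix.of_apply, star, Matrix.one_apply] at h
  convert h using 2 with x
  rfl

lemma q_col (hq : ∀ x, δQ q x = if x = q then 1 else 0)
    (hu : star (Matrix.of fun y x => δQ x y) * (Matrix.of fun y x => δQ x y)
      = (1 : Matrix (∀ j, S j) (∀ j, S j) ℂ)) :
    ∀ x, x ≠ q → δQ x q = 0 := by
  intro x hx
  have h := col_delta δQ hu q x
  rw [if_neg (fun h' => hx h'.symm)] at h
  calc δQ x q = ∑ z : ∀ j, S j, (starRingEnd ℂ) (δQ q z) * δQ x z := by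
        simp only [hq]
        rw [Finset.sum_congr rfl (fun z _ => ?_), Finset.sum_ite_eq' Finset.univ q (fun z => δQ x z)]
        · simp
        · rw [apply_ite (starRingEnd ℂ), map_one, map_zero, ite_mul, one_mul, zero_mul]
    _ = 0 := h

lemma prod_delta {a b : ℤ → ∀ j, S j} {F : Finset ℤ}
    (ha : ∀ i ∉ F, a i = q) (hb : ∀ i ∉ F, b i = q) :
    (∏ i ∈ F, if a i = b i then (1 : ℂ) else 0) = if a = b then 1 else 0 := by
  by_cases h : a = b
  · simp [h]
  · rw [if_neg h]
    obtain ⟨i, hi⟩ := Function.ne_iff.mp h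
    have hiF : i ∈ F := by
      by_contra hiF
      exact hi (by rw [ha i hiF, hb i hiF])
    exact Finset.prod_eq_zero hiF (if_neg hi)

lemma k_col (hq : ∀ x, δQ q x = if x = q then 1 else 0)
    (hu : star (Matrix.of fun y x => δQ x y) * (Matrix.of fun y x => δQ x y)
      = (1 : Matrix (∀ j, S j) (∀ j, S j) ℂ))
    {a b : ℤ → ∀ j, S j} (sa : {i | a i ≠ q}.Finite) (sb : {i | b i ≠ q}.Finite) :
    ∑' e : CS q, (starRingEnd ℂ) (∏ᶠ i, δQ (a i) (e.1 i)) * ∏ᶠ i, δQ (b i) (e.1 i)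
      = if a = b then 1 else 0 := by
  have ha : ∀ i ∉ (sa.toFinset ∪ sb.toFinset), a i = q := by
    intro i hi
    simp only [Finset.mem_union, Set.Finite.mem_toFinset, Set.mem_setOf_eq, not_or, not_not] at hi
    exact hi.1
  have hb : ∀ i ∉ (sa.toFinset ∪ sb.toFinset), b i = q := by
    intro i hi
    simp only [Finset.mem_union, Set.Finite.mem_toFinset, Set.mem_setOf_eq, not_or, not_not] at hi
    exact hi.2
  rw [sum_col q δQ hq sa sb ha hb,
    Finset.prod_congr rfl (fun i _ => col_delta δQ hu (a i) (b i)), prod_delta q ha hb]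

lemma k_row (hq : ∀ x, δQ q x = if x = q then 1 else 0)
    (hu : star (Matrix.of fun y x => δQ x y) * (Matrix.of fun y x => δQ x y)
      = (1 : Matrix (∀ j, S j) (∀ j, S j) ℂ))
    (hu' : (Matrix.of fun y x => δQ x y) * star (Matrix.of fun y x => δQ x y)
      = (1 : Matrix (∀ j, S j) (∀ j, S j) ℂ))
    {a b : ℤ → ∀ j, S j} (sa : {i | a i ≠ q}.Finite) (sb : {i | b i ≠ q}.Finite) :
    ∑' e : CS q, (∏ᶠ i, δQ (e.1 i) (a i)) * (starRingEnd ℂ) (∏ᶠ i, δQ (e.1 i) (b i))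
      = if a = b then 1 else 0 := by
  have ha : ∀ i ∉ (sa.toFinset ∪ sb.toFinset), a i = q := by
    intro i hi
    simp only [Finset.mem_union, Set.Finite.mem_toFinset, Set.mem_setOf_eq, not_or, not_not] at hi
    exact hi.1
  have hb : ∀ i ∉ (sa.toFinset ∪ sb.toFinset), b i = q := by
    intro i hi
    simp only [Finset.mem_union, Set.Finite.mem_toFinset, Set.mem_setOf_eq, not_or, not_not] at hi
    exact hi.2
  rw [sum_row q δQ hq (q_col q δQ hq hu) sa sb ha hb,
    Finset.prod_congr rfl (fun i _ => row_delta δQ hu' (a i) (b i)), prod_delta q ha hb]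


section Perm

variable (N : Fin r → ℤ)

def Pmap (c : ℤ → ∀ j, S j) : ℤ → ∀ j, S j := fun i j => c (i + N j) j

def Pinv (a : ℤ → ∀ j, S j) : ℤ → ∀ j, S j := fun i j => a (i - N j) j

lemma Pmap_Pinv (a : ℤ → ∀ j, S j) : Pmap N (Pinv N a) = a := by
  funext i j; simp [Pmap, Pinv]

lemma Pinv_Pmap (c : ℤ → ∀ j, S j) : Pinv N (Pmap N c) = c := by
  funext i j; simp [Pmap, Pinv]

lemma Pmap_fin {c : ℤ → ∀ j, S j} (sc : {i | c i ≠ q}.Finite) :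
    {i | Pmap N c i ≠ q}.Finite := by
  apply Set.Finite.subset (Set.finite_iUnion (fun j : Fin r => sc.image (fun i => i - N j)))
  intro i hi
  obtain ⟨j, hj⟩ := Function.ne_iff.mp hi
  refine Set.mem_iUnion.mpr ⟨j, ⟨i + N j, ?_, by ring⟩⟩
  exact fun h => hj (by simp [Pmap, h])

lemma Pinv_fin {a : ℤ → ∀ j, S j} (sa : {i | a i ≠ q}.Finite) :
    {i | Pinv N a i ≠ q}.Finite := by
  apply Set.Finite.subset (Set.finite_iUnion (fun j : Fin r => sa.image (fun i => i + N j)))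
  intro i hi
  obtain ⟨j, hj⟩ := Function.ne_iff.mp hi
  refine Set.mem_iUnion.mpr ⟨j, ⟨i - N j, ?_, by ring⟩⟩
  exact fun h => hj (by simp [Pinv, h])

/-- The permutation part as a bijection on configurations. -/
def Pequiv : CS q ≃ CS q where
  toFun c := ⟨Pmap N c.1, Pmap_fin q N c.2⟩
  invFun a := ⟨Pinv N a.1, Pinv_fin q N a.2⟩
  left_inv c := Subtype.ext (Pinv_Pmap N c.1)
  right_inv a := Subtype.ext (Pmap_Pinv N a.1)

end Perm

section Point

/-- The configuration with value `x` at the origin. -/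
def pt (x : ∀ j, S j) : ℤ → ∀ j, S j := fun i => if i = 0 then x else q

lemma pt_fin (x : ∀ j, S j) : {i | pt q x i ≠ q}.Finite := by
  apply Set.Finite.subset (Set.finite_singleton 0)
  intro i hi
  by_contra h
  exact hi (if_neg h)

def ptC (x : ∀ j, S j) : CS q := ⟨pt q x, pt_fin q x⟩

lemma pt_zero (x : ∀ j, S j) : pt q x 0 = x := if_pos rfl

lemma ptC_inj : Function.Injective (ptC q) := by
  intro x y h
  have h2 := congrFun (congrArg Subtype.val h) 0
  have e1 : (ptC q x).1 0 = x := pt_zero q x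
  have e2 : (ptC q y).1 0 = y := pt_zero q y
  rwa [e1, e2] at h2

lemma tsum_CS_pt {M : Type*} [AddCommMonoid M] [TopologicalSpace M]
    (g : CS q → M) (hg : ∀ e : CS q, g e ≠ 0 → ∀ i ≠ (0 : ℤ), e.1 i = q) :
    ∑' e : CS q, g e = ∑ x : ∀ j, S j, g (ptC q x) := by
  rw [← tsum_fintype (L := .unconditional _)]
  refine (tsum_eq_tsum_of_ne_zero_bij (fun x => ptC q x.1) ?_ ?_ ?_)
  · intro x y hxy
    exact Subtype.ext (ptC_inj q hxy)
  · intro e he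
    have hpt : ptC q (e.1 0) = e := by
      apply Subtype.ext; funext i
      by_cases h : i = 0
      · simp [ptC, pt, h]
      · simp only [ptC, pt, if_neg h]
        exact (hg e he i h).symm
    refine ⟨⟨e.1 0, ?_⟩, hpt⟩
    simpa [Function.mem_support, hpt] using he
  · intro x; rfl

/-- The infinite product over a pair of point configurations collapses to a single factor. -/
lemma W_pt (hq : ∀ x, δQ q x = if x = q then 1 else 0) (x z : ∀ j, S j) :
    ∏ᶠ i, δQ (pt q x i) (pt q z i) = δQ x z := by
  have h : ∀ i ∉ ({0} : Finset ℤ), pt q x i = q := by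
    intro i hi; exact if_neg (by simpa using hi)
  have h' : ∀ i ∉ ({0} : Finset ℤ), pt q z i = q := by
    intro i hi; exact if_neg (by simpa using hi)
  rw [W_eq q δQ hq h h', Finset.prod_singleton, pt_zero, pt_zero]

end Point


lemma DFin (F : Finset ℤ) : {e : CS q | ∀ i ∉ F, e.1 i = q}.Finite := by
  apply Set.Finite.of_finite_image (f := fun e : CS q => (fun i : ↥F => e.1 i.1))
  · exact Set.toFinite _
  · intro e₁ h₁ e₂ h₂ h
    apply Subtype.ext; funext i
    by_cases hi : i ∈ F
    · exact congrFun h ⟨i, hi⟩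
    · rw [h₁ i hi, h₂ i hi]

lemma normsq_complex (z : ℂ) : ((‖z‖ : ℝ) : ℂ) ^ 2 = (starRingEnd ℂ) z * z := by
  rw [mul_comm, Complex.mul_conj]
  rw [show Complex.normSq z = ‖z‖ ^ 2 by rw [Complex.normSq_eq_norm_sq]]
  push_cast
  ring

lemma unitary_normPres (N : Fin r → ℤ) (hq : ∀ x, δQ q x = if x = q then 1 else 0)
    (hu : star (Matrix.of fun y x => δQ x y) * (Matrix.of fun y x => δQ x y)
      = (1 : Matrix (∀ j, S j) (∀ j, S j) ℂ))
    (f : CS q →₀ ℂ) :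
    ∑' d : CS q, ‖∑ c ∈ f.support, f c * ∏ᶠ i, δQ (Pmap N c.1 i) (d.1 i)‖ ^ 2
      = ∑ c ∈ f.support, ‖f c‖ ^ 2 := by
  classical
  set F : Finset ℤ := f.support.sup (fun c => (Pmap_fin q N c.2).toFinset) with hF
  have hPF : ∀ c ∈ f.support, ∀ i ∉ F, Pmap N c.1 i = q := by
    intro c hc i hi
    by_contra h
    exact hi (Finset.le_sup (f := fun c => (Pmap_fin q N c.2).toFinset) hc
      ((Pmap_fin q N c.2).mem_toFinset.mpr h))
  set T : Finset (CS q) := (DFin q F).toFinset with hT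
  have hWz : ∀ d : CS q, d ∉ T → ∀ c ∈ f.support,
      (∏ᶠ i, δQ (Pmap N c.1 i) (d.1 i)) = 0 := by
    intro d hd c hc
    rw [hT, Set.Finite.mem_toFinset] at hd
    simp only [Set.mem_setOf_eq, not_forall] at hd
    obtain ⟨i, hiF, hdi⟩ := hd
    exact W_zero q δQ hq (Pmap_fin q N c.2) d.2 (hPF c hc i hiF) hdi
  have hgz : ∀ d : CS q, d ∉ T →
      (∑ c ∈ f.support, f c * ∏ᶠ i, δQ (Pmap N c.1 i) (d.1 i)) = 0 := by
    intro d hd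
    exact Finset.sum_eq_zero fun c hc => by rw [hWz d hd c hc, mul_zero]
  rw [tsum_eq_sum (s := T) (fun d hd => by rw [hgz d hd]; simp)]
  have key : (∑ d ∈ T, ((‖∑ c ∈ f.support, f c * ∏ᶠ i, δQ (Pmap N c.1 i) (d.1 i)‖ : ℝ) : ℂ) ^ 2)
      = ∑ c ∈ f.support, ((‖f c‖ : ℝ) : ℂ) ^ 2 := by
    have inner_eval : ∀ c' ∈ f.support, ∀ c ∈ f.support,
        (∑ d ∈ T, (starRingEnd ℂ) (∏ᶠ i, δQ (Pmap N c'.1 i) (d.1 i)) *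
          ∏ᶠ i, δQ (Pmap N c.1 i) (d.1 i)) = if c' = c then 1 else 0 := by
      intro c' hc' c hc
      have h1 : (∑ d ∈ T, (starRingEnd ℂ) (∏ᶠ i, δQ (Pmap N c'.1 i) (d.1 i)) *
            ∏ᶠ i, δQ (Pmap N c.1 i) (d.1 i))
          = ∑' d : CS q, (starRingEnd ℂ) (∏ᶠ i, δQ (Pmap N c'.1 i) (d.1 i)) *
            ∏ᶠ i, δQ (Pmap N c.1 i) (d.1 i) := by
        rw [tsum_eq_sum (s := T) (fun d hd => by
          rw [hWz d hd c' hc', map_zero, zero_mul])]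
      rw [h1, k_col q δQ hq hu (Pmap_fin q N c'.2) (Pmap_fin q N c.2)]
      have hiff : (Pmap N c'.1 = Pmap N c.1) ↔ (c' = c) := by
        constructor
        · intro h
          exact Subtype.ext (by rw [← Pinv_Pmap N c'.1, h, Pinv_Pmap])
        · intro h; rw [h]
      simp only [hiff]
    calc (∑ d ∈ T, ((‖∑ c ∈ f.support, f c * ∏ᶠ i, δQ (Pmap N c.1 i) (d.1 i)‖ : ℝ) : ℂ) ^ 2)
        = ∑ d ∈ T, ∑ c' ∈ f.support, ∑ c ∈ f.support,
            ((starRingEnd ℂ) (f c') * f c) *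
            ((starRingEnd ℂ) (∏ᶠ i, δQ (Pmap N c'.1 i) (d.1 i)) *
              ∏ᶠ i, δQ (Pmap N c.1 i) (d.1 i)) := by
          refine Finset.sum_congr rfl fun d _ => ?_
          rw [normsq_complex, map_sum, Finset.sum_mul_sum]
          refine Finset.sum_congr rfl fun c' _ => Finset.sum_congr rfl fun c _ => ?_
          rw [map_mul]; ring
      _ = ∑ c' ∈ f.support, ∑ c ∈ f.support,
            ((starRingEnd ℂ) (f c') * f c) *
            ∑ d ∈ T, ((starRingEnd ℂ) (∏ᶠ i, δQ (Pmap N c'.1 i) (d.1 i)) *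
              ∏ᶠ i, δQ (Pmap N c.1 i) (d.1 i)) := by
          rw [Finset.sum_comm]
          refine Finset.sum_congr rfl fun c' _ => ?_
          rw [Finset.sum_comm]
          refine Finset.sum_congr rfl fun c _ => ?_
          rw [Finset.mul_sum]
      _ = ∑ c' ∈ f.support, ∑ c ∈ f.support,
            if c' = c then (starRingEnd ℂ) (f c') * f c else 0 := by
          refine Finset.sum_congr rfl fun c' hc' => Finset.sum_congr rfl fun c hc => ?_
          rw [inner_eval c' hc' c hc]
          split_ifs <;> ring
      _ = ∑ c' ∈ f.support, (starRingEnd ℂ) (f c') * f c' := by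
          refine Finset.sum_congr rfl fun c' hc' => ?_
          rw [Finset.sum_ite_eq f.support c' (fun c => (starRingEnd ℂ) (f c') * f c),
            if_pos hc']
      _ = ∑ c ∈ f.support, ((‖f c‖ : ℝ) : ℂ) ^ 2 := by
          refine Finset.sum_congr rfl fun c _ => ?_
          rw [normsq_complex]
  exact_mod_cast key


def ptP (N : Fin r → ℤ) (x : ∀ j, S j) : CS q :=
  ⟨Pinv N (pt q x), Pinv_fin q N (pt_fin q x)⟩

lemma ptP_inj (N : Fin r → ℤ) : Function.Injective (ptP q N) := by
  intro x y h
  have h2 : Pinv N (pt q x) = Pinv N (pt q y) := congrArg Subtype.val h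
  have h3 : pt q x = pt q y := by
    rw [← Pmap_Pinv N (pt q x), ← Pmap_Pinv N (pt q y), h2]
  have := congrFun h3 0
  rwa [pt_zero, pt_zero] at this

lemma normPres_unitary (N : Fin r → ℤ) (hq : ∀ x, δQ q x = if x = q then 1 else 0)
    (hnp : ∀ f : CS q →₀ ℂ,
      ∑' d : CS q, ‖∑ c ∈ f.support, f c * ∏ᶠ i, δQ (Pmap N c.1 i) (d.1 i)‖ ^ 2
        = ∑ c ∈ f.support, ‖f c‖ ^ 2) :
    star (Matrix.of fun y x => δQ x y) * (Matrix.of fun y x => δQ x y)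
      = (1 : Matrix (∀ j, S j) (∀ j, S j) ℂ) := by
  classical
  set L := Matrix.toEuclideanLin (Matrix.of fun y x => δQ x y) with hL
  have happ : ∀ (u : EuclideanSpace ℂ (∀ j, S j)) (z : ∀ j, S j),
      L u z = ∑ x : ∀ j, S j, u x * δQ x z := by
    intro u z
    rw [hL, Matrix.toEuclideanLin_apply]
    show Matrix.mulVec (Matrix.of fun y x => δQ x y) (fun x => u x) z = _
    rw [Matrix.mulVec, dotProduct]
    exact Finset.sum_congr rfl fun x _ => by rw [Matrix.of_apply]; ring
  have hnorm : ∀ u : EuclideanSpace ℂ (∀ j, S j), ‖L u‖ = ‖u‖ := by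
    intro u
    set u₀ : (∀ j, S j) →₀ ℂ := Finsupp.equivFunOnFinite.symm u with hu₀
    have hu₀app : ∀ x, u₀ x = u x := fun x => rfl
    set emb : (∀ j, S j) ↪ CS q := ⟨ptP q N, ptP_inj q N⟩ with hemb
    set f : CS q →₀ ℂ := Finsupp.embDomain emb u₀ with hf
    have h := hnp f
    have hsupp : f.support = u₀.support.map emb := Finsupp.support_embDomain emb u₀
    -- right hand side
    have hrhs : (∑ c ∈ f.support, ‖f c‖ ^ 2) = ∑ x : ∀ j, S j, ‖u x‖ ^ 2 := by
      rw [hsupp, Finset.sum_map]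
      have : ∀ x ∈ u₀.support, ‖f (emb x)‖ ^ 2 = ‖u x‖ ^ 2 := fun x _ => by
        rw [hf, Finsupp.embDomain_apply_self, hu₀app]
      rw [Finset.sum_congr rfl this]
      refine Finset.sum_subset (Finset.subset_univ _) fun x _ hx => ?_
      rw [Finsupp.notMem_support_iff.mp hx |> fun h0 => show u x = 0 from by
        rw [← hu₀app]; exact h0]
      simp
    -- inner sums
    have hinner : ∀ d : CS q,
        (∑ c ∈ f.support, f c * ∏ᶠ i, δQ (Pmap N c.1 i) (d.1 i))
          = ∑ x : ∀ j, S j, u x * ∏ᶠ i, δQ (pt q x i) (d.1 i) := by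
      intro d
      rw [hsupp, Finset.sum_map]
      have : ∀ x ∈ u₀.support, f (emb x) * (∏ᶠ i, δQ (Pmap N (emb x).1 i) (d.1 i))
          = u x * ∏ᶠ i, δQ (pt q x i) (d.1 i) := by
        intro x _
        rw [hf, Finsupp.embDomain_apply_self, hu₀app]
        congr 1
        have : Pmap N (emb x).1 = pt q x := Pmap_Pinv N (pt q x)
        rw [this]
      rw [Finset.sum_congr rfl this]
      refine Finset.sum_subset (Finset.subset_univ _) fun x _ hx => ?_
      have h0 : u x = 0 := by rw [← hu₀app]; exact Finsupp.notMem_support_iff.mp hx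
      rw [h0, zero_mul]
    -- evaluate tsum
    have hlhs : (∑' d : CS q, ‖∑ c ∈ f.support, f c * ∏ᶠ i, δQ (Pmap N c.1 i) (d.1 i)‖ ^ 2)
        = ∑ z : ∀ j, S j, ‖L u z‖ ^ 2 := by
      calc (∑' d : CS q, ‖∑ c ∈ f.support, f c * ∏ᶠ i, δQ (Pmap N c.1 i) (d.1 i)‖ ^ 2)
          = ∑' d : CS q, ‖∑ x : ∀ j, S j, u x * ∏ᶠ i, δQ (pt q x i) (d.1 i)‖ ^ 2 := by
            exact tsum_congr fun d => by rw [hinner d]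
        _ = ∑ z : ∀ j, S j, ‖∑ x : ∀ j, S j, u x * ∏ᶠ i, δQ (pt q x i) ((ptC q z).1 i)‖ ^ 2 := by
            refine tsum_CS_pt q _ ?_
            intro e he i hi
            by_contra hei
            refine he ?_
            have : ∀ x : ∀ j, S j, (∏ᶠ i', δQ (pt q x i') (e.1 i')) = 0 := fun x =>
              W_zero q δQ hq (pt_fin q x) e.2 (if_neg hi) hei
            simp [this]
        _ = ∑ z : ∀ j, S j, ‖L u z‖ ^ 2 := by
            refine Finset.sum_congr rfl fun z _ => ?_
            have hz : (∑ x : ∀ j, S j, u x * ∏ᶠ i, δQ (pt q x i) ((ptC q z).1 i)) = L u z := by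
              show (∑ x : ∀ j, S j, u x * ∏ᶠ i, δQ (pt q x i) (pt q z i)) = L u z
              rw [happ u z]
              refine Finset.sum_congr rfl fun x _ => ?_
              rw [W_pt q δQ hq x z]
            rw [hz]
    rw [hlhs, hrhs] at h
    rw [EuclideanSpace.norm_eq, EuclideanSpace.norm_eq, h]
  have hinner := (LinearMap.norm_map_iff_inner_map_map (𝕜 := ℂ) L).mp hnorm
  have hsingle : ∀ (x : ∀ j, S j) (z : ∀ j, S j),
      L (EuclideanSpace.single x (1:ℂ)) z = δQ x z := by
    intro x z
    rw [happ]
    have : ∀ w : ∀ j, S j, EuclideanSpace.single x (1:ℂ) w * δQ w z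
        = if x = w then δQ w z else 0 := by
      intro w
      rw [EuclideanSpace.single_apply]
      split_ifs with h1 h2 h2
      · rw [one_mul]
      · exact absurd h1.symm h2
      · exact absurd h2.symm h1
      · rw [zero_mul]
    rw [Finset.sum_congr rfl fun w _ => this w, Finset.sum_ite_eq Finset.univ x fun w => δQ w z,
      if_pos (Finset.mem_univ x)]
  ext x y
  have h := hinner (EuclideanSpace.single x (1:ℂ)) (EuclideanSpace.single y (1:ℂ))
  rw [PiLp.inner_apply, PiLp.inner_apply] at h
  simp only [RCLike.inner_apply'] at h
  have hl : (∑ z : ∀ j, S j, (starRingEnd ℂ) (L (EuclideanSpace.single x 1) z) *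
      L (EuclideanSpace.single y 1) z) = ∑ z : ∀ j, S j, (starRingEnd ℂ) (δQ x z) * δQ y z := by
    refine Finset.sum_congr rfl fun z _ => by rw [hsingle x z, hsingle y z]
  have hr : (∑ z : ∀ j, S j, (starRingEnd ℂ) (EuclideanSpace.single x (1:ℂ) z) *
      EuclideanSpace.single y (1:ℂ) z) = if x = y then 1 else 0 := by
    have : ∀ z : ∀ j, S j, (starRingEnd ℂ) (EuclideanSpace.single x (1:ℂ) z) *
        EuclideanSpace.single y (1:ℂ) z
        = if x = z then EuclideanSpace.single y (1:ℂ) z else 0 := by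
      intro z
      rw [EuclideanSpace.single_apply]
      split_ifs with h1 h2 h2
      · rw [map_one, one_mul]
      · exact absurd h1.symm h2
      · exact absurd h2.symm h1
      · rw [map_zero, zero_mul]
    rw [Finset.sum_congr rfl fun z _ => this z,
      Finset.sum_ite_eq Finset.univ x fun z => EuclideanSpace.single y (1:ℂ) z,
      if_pos (Finset.mem_univ x), EuclideanSpace.single_apply]
  rw [Matrix.mul_apply, Matrix.one_apply]
  calc (∑ z : ∀ j, S j, (star (Matrix.of fun y x => δQ x y)) x z * (Matrix.of fun y x => δQ x y) z y)
      = ∑ z : ∀ j, S j, (starRingEnd ℂ) (δQ x z) * δQ y z := by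
        refine Finset.sum_congr rfl fun z _ => ?_
        rw [Matrix.star_apply, Matrix.of_apply, Matrix.of_apply]
        rfl
    _ = if x = y then 1 else 0 := by rw [← hl, h, hr]


lemma unitary_orth_col (N : Fin r → ℤ) (hq : ∀ x, δQ q x = if x = q then 1 else 0)
    (hu : star (Matrix.of fun y x => δQ x y) * (Matrix.of fun y x => δQ x y)
      = (1 : Matrix (∀ j, S j) (∀ j, S j) ℂ)) (c d : CS q) :
    (∑' e : CS q, (starRingEnd ℂ) (∏ᶠ i, δQ (Pmap N c.1 i) (e.1 i)) *
        ∏ᶠ i, δQ (Pmap N d.1 i) (e.1 i))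
      = if c = d then 1 else 0 := by
  rw [k_col q δQ hq hu (Pmap_fin q N c.2) (Pmap_fin q N d.2)]
  by_cases h : c = d
  · rw [if_pos (by rw [h]), if_pos h]
  · rw [if_neg (fun hh => h (Subtype.ext (by rw [← Pinv_Pmap N c.1, hh, Pinv_Pmap]))), if_neg h]

lemma unitary_orth_row (N : Fin r → ℤ) (hq : ∀ x, δQ q x = if x = q then 1 else 0)
    (hu : star (Matrix.of fun y x => δQ x y) * (Matrix.of fun y x => δQ x y)
      = (1 : Matrix (∀ j, S j) (∀ j, S j) ℂ))
    (hu' : (Matrix.of fun y x => δQ x y) * star (Matrix.of fun y x => δQ x y)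
      = (1 : Matrix (∀ j, S j) (∀ j, S j) ℂ)) (c d : CS q) :
    (∑' e : CS q, (∏ᶠ i, δQ (Pmap N e.1 i) (c.1 i)) *
        (starRingEnd ℂ) (∏ᶠ i, δQ (Pmap N e.1 i) (d.1 i)))
      = if c = d then 1 else 0 := by
  calc (∑' e : CS q, (∏ᶠ i, δQ (Pmap N e.1 i) (c.1 i)) *
        (starRingEnd ℂ) (∏ᶠ i, δQ (Pmap N e.1 i) (d.1 i)))
      = ∑' e : CS q, (fun a : CS q => (∏ᶠ i, δQ (a.1 i) (c.1 i)) *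
          (starRingEnd ℂ) (∏ᶠ i, δQ (a.1 i) (d.1 i))) ((Pequiv q N) e) :=
        tsum_congr fun e => rfl
    _ = ∑' a : CS q, (fun a : CS q => (∏ᶠ i, δQ (a.1 i) (c.1 i)) *
          (starRingEnd ℂ) (∏ᶠ i, δQ (a.1 i) (d.1 i))) a :=
        Equiv.tsum_eq (Pequiv q N) (fun a : CS q => (∏ᶠ i, δQ (a.1 i) (c.1 i)) *
          (starRingEnd ℂ) (∏ᶠ i, δQ (a.1 i) (d.1 i)))
    _ = ∑' a : CS q, (∏ᶠ i, δQ (a.1 i) (c.1 i)) *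
          (starRingEnd ℂ) (∏ᶠ i, δQ (a.1 i) (d.1 i)) := tsum_congr fun a => rfl
    _ = if c.1 = d.1 then 1 else 0 := k_row q δQ hq hu hu' c.2 d.2
    _ = if c = d then 1 else 0 := by
        by_cases h : c = d
        · rw [if_pos (by rw [h]), if_pos h]
        · rw [if_neg (fun hh => h (Subtype.ext hh)), if_neg h]

lemma orth_unitary (N : Fin r → ℤ) (hq : ∀ x, δQ q x = if x = q then 1 else 0)
    (horth : ∀ c d : CS q,
      (∑' e : CS q, (starRingEnd ℂ) (∏ᶠ i, δQ (Pmap N c.1 i) (e.1 i)) *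
          ∏ᶠ i, δQ (Pmap N d.1 i) (e.1 i)) = if c = d then 1 else 0) :
    star (Matrix.of fun y x => δQ x y) * (Matrix.of fun y x => δQ x y)
      = (1 : Matrix (∀ j, S j) (∀ j, S j) ℂ) := by
  classical
  ext x y
  have h := horth (ptP q N x) (ptP q N y)
  have hpx : Pmap N (ptP q N x).1 = pt q x := Pmap_Pinv N (pt q x)
  have hpy : Pmap N (ptP q N y).1 = pt q y := Pmap_Pinv N (pt q y)
  rw [hpx, hpy] at h
  have heval : (∑' e : CS q, (starRingEnd ℂ) (∏ᶠ i, δQ (pt q x i) (e.1 i)) *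
      ∏ᶠ i, δQ (pt q y i) (e.1 i)) = ∑ z : ∀ j, S j, (starRingEnd ℂ) (δQ x z) * δQ y z := by
    rw [tsum_CS_pt q _ ?_]
    · refine Finset.sum_congr rfl fun z _ => ?_
      have h1 : (∏ᶠ i, δQ (pt q x i) ((ptC q z).1 i)) = δQ x z := W_pt q δQ hq x z
      have h2 : (∏ᶠ i, δQ (pt q y i) ((ptC q z).1 i)) = δQ y z := W_pt q δQ hq y z
      rw [h1, h2]
    · intro e he i hi
      by_contra hei
      exact he (by rw [W_zero q δQ hq (pt_fin q x) e.2 (if_neg hi) hei, map_zero, zero_mul])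
  rw [heval] at h
  have hrhs : (if ptP q N x = ptP q N y then (1:ℂ) else 0) = if x = y then 1 else 0 := by
    by_cases hxy : x = y
    · rw [if_pos (by rw [hxy]), if_pos hxy]
    · rw [if_neg (fun hh => hxy (ptP_inj q N hh)), if_neg hxy]
  rw [hrhs] at h
  rw [Matrix.mul_apply, Matrix.one_apply]
  calc (∑ z : ∀ j, S j, (star (Matrix.of fun y x => δQ x y)) x z * (Matrix.of fun y x => δQ x y) z y)
      = ∑ z : ∀ j, S j, (starRingEnd ℂ) (δQ x z) * δQ y z := by
        refine Finset.sum_congr rfl fun z _ => ?_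
        rw [Matrix.star_apply, Matrix.of_apply, Matrix.of_apply]
        rfl
    _ = if x = y then 1 else 0 := h

end WatrousAux


open WatrousAux in
/-- Watrous' theorem for partitioned LQCAs: with local transition
`δ = δ_Q ∘ δ_p` (classical permutation part `δ_p`, quantum part `δ_Q` with
local transition matrix `Q(y,x) = δ_Q(x)(y)`), the following are equivalent:
(1) `Q` is unitary; (2) the time evolution operator `U_A` preserves the `ℓ²`
norm (of finitely supported superpositions of configurations); (3) `U_A` is
unitary. -/
theorem plqca_wellformed_iff_unitary {r : ℕ}
    (S : Fin r → Type*) [∀ j, Fintype (S j)] [∀ j, Nonempty (S j)]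
    [∀ j, DecidableEq (S j)]
    (q : ∀ j, S j) (N : Fin r → ℤ) (hN : StrictMono N)
    (δQ : (∀ j, S j) → EuclideanSpace ℂ (∀ j, S j))
    (hq : ∀ x, δQ q x = if x = q then 1 else 0) :
    (((Matrix.of fun y x => δQ x y) ∈ Matrix.unitaryGroup (∀ j, S j) ℂ)
        ↔ (∀ f : {c : ℤ → ∀ j, S j // {i | c i ≠ q}.Finite} →₀ ℂ,
            (∑' d : {c : ℤ → ∀ j, S j // {i | c i ≠ q}.Finite},
                ‖∑ c ∈ f.support, f c *
                    ∏ᶠ i : ℤ, δQ (fun j => c.1 (i + N j) j) (d.1 i)‖ ^ 2)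
              = ∑ c ∈ f.support, ‖f c‖ ^ 2))
      ∧
    ((∀ f : {c : ℤ → ∀ j, S j // {i | c i ≠ q}.Finite} →₀ ℂ,
        (∑' d : {c : ℤ → ∀ j, S j // {i | c i ≠ q}.Finite},
            ‖∑ c ∈ f.support, f c *
                ∏ᶠ i : ℤ, δQ (fun j => c.1 (i + N j) j) (d.1 i)‖ ^ 2)
          = ∑ c ∈ f.support, ‖f c‖ ^ 2)
        ↔ (∀ c d : {c : ℤ → ∀ j, S j // {i | c i ≠ q}.Finite},
            ((∑' e : {c : ℤ → ∀ j, S j // {i | c i ≠ q}.Finite},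
                (starRingEnd ℂ)
                    (∏ᶠ i : ℤ, δQ (fun j => c.1 (i + N j) j) (e.1 i)) *
                  ∏ᶠ i : ℤ, δQ (fun j => d.1 (i + N j) j) (e.1 i))
              = if c = d then 1 else 0) ∧
            ((∑' e : {c : ℤ → ∀ j, S j // {i | c i ≠ q}.Finite},
                (∏ᶠ i : ℤ, δQ (fun j => e.1 (i + N j) j) (c.1 i)) *
                  (starRingEnd ℂ)
                    (∏ᶠ i : ℤ, δQ (fun j => e.1 (i + N j) j) (d.1 i)))
              = if c = d then 1 else 0))) := by
  constructor
  · constructor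
    · intro hu f
      exact unitary_normPres q δQ N hq (Matrix.mem_unitaryGroup_iff'.mp hu) f
    · intro hnp
      exact Matrix.mem_unitaryGroup_iff'.mpr (normPres_unitary q δQ N hq hnp)
  · constructor
    · intro hnp c d
      have hu := normPres_unitary q δQ N hq hnp
      have hu' : (Matrix.of fun y x => δQ x y) * star (Matrix.of fun y x => δQ x y) = 1 :=
        mul_eq_one_comm.mp hu
      exact ⟨unitary_orth_col q δQ N hq hu c d, unitary_orth_row q δQ N hq hu hu' c d⟩
    · intro horth f
      have hu := orth_unitary q δQ N hq (fun c d => (horth c d).1)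
      exact unitary_normPres q δQ N hq hu f
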